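/- For any f, g ∈ ℂ[x] and any i ∈ ℕ, one has gcd(f,g)(x^i) = gcd(f(x^i), g(x^i)) and lcm(f,g)(x^i) = lcm(f(x^i), g(x^i)) (up to units in ℂ[x]). -/
import Mathlib

open Polynomial

private lemma comp_dvd_comp {a b : Polynomial ℂ} (q : Polynomial ℂ) (h : a ∣ b) :
    a.comp q ∣ b.comp q := by
  obtain ⟨c, rfl⟩ := h
  exact ⟨c.comp q, (mul_comp a c q)⟩

private lemma assoc_comp {a b : Polynomial ℂ} (q : Polynomial ℂ) (h : Associated a b) :
    Associated (a.comp q) (b.comp q) := by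
  have := h.map (aeval q : Polynomial ℂ →ₐ[ℂ] Polynomial ℂ).toMonoidHom
  simpa [aeval_def, eval₂_eq_eval_map, comp, Polynomial.algebraMap_eq] using this

theorem stmt12 (f g : Polynomial ℂ) (i : ℕ) (hi : 0 < i) :
    Associated ((gcd f g).comp (Polynomial.X ^ i))
      (gcd (f.comp (Polynomial.X ^ i)) (g.comp (Polynomial.X ^ i))) ∧
    Associated ((lcm f g).comp (Polynomial.X ^ i))
      (lcm (f.comp (Polynomial.X ^ i)) (g.comp (Polynomial.X ^ i))) := by
  set q : Polynomial ℂ := Polynomial.X ^ i with hq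
  set F := f.comp q
  set G := g.comp q
  have h1 : (gcd f g).comp q ∣ gcd F G :=
    dvd_gcd (comp_dvd_comp q (gcd_dvd_left f g)) (comp_dvd_comp q (gcd_dvd_right f g))
  have h2 : gcd F G ∣ (gcd f g).comp q := by
    obtain ⟨a, b, hab⟩ := exists_gcd_eq_mul_add_mul f g
    rw [hab, add_comp, mul_comp, mul_comp]
    exact dvd_add (Dvd.dvd.mul_right (gcd_dvd_left F G) _)
      (Dvd.dvd.mul_right (gcd_dvd_right F G) _)
  have hgcd : Associated ((gcd f g).comp q) (gcd F G) := associated_of_dvd_dvd h1 h2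
  refine ⟨hgcd, ?_⟩
  by_cases hf : f = 0
  · simp [hf, F]
  by_cases hg : g = 0
  · simp [hg, G]
  -- nonzero case
  have hqdeg : q ≠ C (q.coeff 0) := by
    intro h
    have h2 := congrArg Polynomial.natDegree h
    rw [Polynomial.natDegree_C, hq, Polynomial.natDegree_X_pow] at h2
    omega
  have hcompne : ∀ p : Polynomial ℂ, p ≠ 0 → p.comp q ≠ 0 := by
    intro p hp h
    rcases (Polynomial.comp_eq_zero_iff).1 h with h' | ⟨_, h'⟩
    · exact hp h'
    · exact hqdeg h'
  have hgne : gcd f g ≠ 0 := gcd_ne_zero_of_left hf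
  have hgcne : (gcd f g).comp q ≠ 0 := hcompne _ hgne
  have key : Associated ((gcd f g).comp q * (lcm f g).comp q) (gcd F G * lcm F G) := by
    have h3 : Associated (gcd f g * lcm f g) (f * g) := gcd_mul_lcm f g
    have h4 : Associated ((gcd f g * lcm f g).comp q) (F * G) := by
      simpa [mul_comp] using assoc_comp q h3
    have h5 : Associated (F * G) (gcd F G * lcm F G) := (gcd_mul_lcm F G).symm
    rw [mul_comp] at h4
    exact h4.trans h5
  exact Associated.of_mul_left key hgcd hgcne
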